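/- Left octonion multiplication scales the inner product by the norm: for all a, x, y ∈ ℍ × ℍ with the Cayley–Dickson product, ⟨a * x, a * y⟩ = N(a) * ⟨x, y⟩, where ⟨·,·⟩ is the standard Euclidean inner product on the 8 real coordinates. In particular, if N(a) = 1 then left multiplication by a is a linear isometry of ℝ⁸ and preserves orthogonality. -/

import Mathlib

open Quaternion

/-- The Cayley–Dickson product on `ℍ × ℍ`, modelling the octonions. -/
noncomputable def omul (x y : ℍ[ℝ] × ℍ[ℝ]) : ℍ[ℝ] × ℍ[ℝ] :=
  (x.1 * y.1 - star y.2 * x.2, y.2 * x.1 + x.2 * star y.1)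

/-- The octonionic norm on `ℍ × ℍ`. -/
noncomputable def onorm (x : ℍ[ℝ] × ℍ[ℝ]) : ℝ := ‖x.1‖ ^ 2 + ‖x.2‖ ^ 2

/-- The eight real coordinates of an octonion in `ℍ × ℍ`. -/
def ocoord (x : ℍ[ℝ] × ℍ[ℝ]) : Fin 8 → ℝ
  | 0 => x.1.re
  | 1 => x.1.imI
  | 2 => x.1.imJ
  | 3 => x.1.imK
  | 4 => x.2.re
  | 5 => x.2.imI
  | 6 => x.2.imJ
  | 7 => x.2.imK

/-- The standard Euclidean inner product of the 8 real coordinates. -/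
noncomputable def oinner (x y : ℍ[ℝ] × ℍ[ℝ]) : ℝ :=
  ∑ i : Fin 8, ocoord x i * ocoord y i

set_option maxHeartbeats 2000000 in
theorem oinner_omul_left_key (a x y : ℍ[ℝ] × ℍ[ℝ]) :
    oinner (omul a x) (omul a y) = onorm a * oinner x y := by
  simp only [oinner, omul, onorm, ocoord, Fin.sum_univ_eight, sq,
    ← Quaternion.normSq_eq_norm_mul_self, Quaternion.normSq_def',
    Quaternion.re_mul, Quaternion.imI_mul, Quaternion.imJ_mul, Quaternion.imK_mul,
    Quaternion.re_sub, Quaternion.imI_sub, Quaternion.imJ_sub, Quaternion.imK_sub,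
    Quaternion.re_add, Quaternion.imI_add, Quaternion.imJ_add, Quaternion.imK_add,
    Quaternion.re_star, Quaternion.imI_star, Quaternion.imJ_star, Quaternion.imK_star]
  ring

/-- Left octonion multiplication scales the inner product by the norm; in
particular left multiplication by a unit octonion preserves the inner product
(so it is a linear isometry of `ℝ⁸` and preserves orthogonality). -/
theorem oinner_omul_left (a x y : ℍ[ℝ] × ℍ[ℝ]) :
    oinner (omul a x) (omul a y) = onorm a * oinner x y ∧
    (onorm a = 1 → oinner (omul a x) (omul a y) = oinner x y) := by
  exact ⟨oinner_omul_left_key a x y, fun h => by rw [oinner_omul_left_key, h, one_mul]⟩
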